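/- (Piggybacking Design 1, repair of a systematic node in the last group.) Let F be a field, r ≥ 2, t ≥ 1, and k = r·t. Let p : Fin r → Fin k → F be the parity encoding vectors, and let ℓ : Fin k lie in the last group G_{r−1} = {i : (r−1)·t ≤ i < k}. Assume p 0 ℓ ≠ 0 and p (r−1) ℓ ≠ 0. Then there exists a function φ taking k + t + r − 2 field elements to F × F such that for all messages a, b : Fin k → F, applying φ to the values (b i for each i ≠ ℓ), Σ_i p 0 i · b i, the transformed symbol Σ_{i ∉ G_{r−2}} p (r−1) i · a i − Σ_i p (r−1) i · b i, the r−2 symbols Σ_i p m i · b i + Σ_{i ∈ G_{m−1}} p (r−1) i · a i for m = 1, …, r−2, and (a i for each i ∈ G_{r−1} with i ≠ ℓ) yields (a ℓ, b ℓ). That is, the failed systematic node ℓ in the last group is repaired by reading and downloading only k + t + r − 2 symbols. -/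

import Mathlib

/-- The repair function. -/
noncomputable def design1RepairPhi {F : Type*} [Field F] {k r2 : ℕ} (t' : ℕ)
    (p0 pR : Fin k → F) (pm : Fin r2 → Fin k → F) (ℓ : Fin k)
    (bo : {i : Fin k // i ≠ ℓ} → F) (S0 T : F) (P : Fin r2 → F)
    (ao : {i : Fin k // t' ≤ (i : ℕ) ∧ i ≠ ℓ} → F) : F × F :=
  let bl := (S0 - ∑ i : {i : Fin k // i ≠ ℓ}, p0 i * bo i) / p0 ℓ
  let B : Fin k → F := fun i => if h : i = ℓ then bl else bo ⟨i, h⟩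
  ((T + ∑ i, pR i * B i - ∑ m, (P m - ∑ i, pm m i * B i)
      - ∑ i : {i : Fin k // t' ≤ (i : ℕ) ∧ i ≠ ℓ}, pR i * ao i) / pR ℓ, bl)

lemma sum_subtype_ne {F : Type*} [AddCommGroup F] {k : ℕ} (ℓ : Fin k) (f : Fin k → F) :
    ∑ i : {i : Fin k // i ≠ ℓ}, f i = (∑ i, f i) - f ℓ := by
  rw [← Finset.sum_subtype (Finset.univ.erase ℓ) (fun x => by simp) f,
    Finset.sum_erase_eq_sub (Finset.mem_univ ℓ)]

lemma sum_subtype_le_ne {F : Type*} [AddCommGroup F] {k : ℕ} (t' : ℕ) (ℓ : Fin k)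
    (hℓ : t' ≤ (ℓ : ℕ)) (f : Fin k → F) :
    ∑ i : {i : Fin k // t' ≤ (i : ℕ) ∧ i ≠ ℓ}, f i
      = (∑ i ∈ Finset.univ.filter (fun i : Fin k => t' ≤ (i : ℕ)), f i) - f ℓ := by
  rw [← Finset.sum_subtype ((Finset.univ.filter (fun i : Fin k => t' ≤ (i : ℕ))).erase ℓ)
      (fun x => by simp [Finset.mem_erase, and_comm]) f,
    Finset.sum_erase_eq_sub (by simp [hℓ])]

lemma sum_groups {F : Type*} [AddCommMonoid F] {k t : ℕ} (n : ℕ) (g : Fin k → F) :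
    ∑ m : Fin n, ∑ i ∈ Finset.univ.filter
        (fun i : Fin k => (m : ℕ) * t ≤ (i : ℕ) ∧ (i : ℕ) < ((m : ℕ) + 1) * t), g i
      = ∑ i ∈ Finset.univ.filter (fun i : Fin k => (i : ℕ) < n * t), g i := by
  induction n with
  | zero => simp
  | succ n ih =>
    rw [Fin.sum_univ_castSucc]
    simp only [Fin.coe_castSucc, Fin.val_last, ih]
    rw [Finset.sum_filter, Finset.sum_filter, Finset.sum_filter, ← Finset.sum_add_distrib]
    refine Finset.sum_congr rfl fun i _ => ?_
    simp only [Nat.succ_mul]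
    generalize n * t = A
    split_ifs <;> first | (exfalso; omega) | simp

theorem design1_repair_systematic_last_group
    {F : Type*} [Field F] {r t : ℕ} (hr : 2 ≤ r) (ht : 1 ≤ t)
    {k : ℕ} (hk : k = r * t)
    (p : Fin r → Fin k → F) (ℓ : Fin k)
    (hℓ : (r - 1) * t ≤ (ℓ : ℕ))
    (hp0 : p ⟨0, by omega⟩ ℓ ≠ 0) (hpl : p ⟨r - 1, by omega⟩ ℓ ≠ 0) :
    ∃ φ : ({i : Fin k // i ≠ ℓ} → F) → F → F → (Fin (r - 2) → F) →
        ({i : Fin k // (r - 1) * t ≤ (i : ℕ) ∧ i ≠ ℓ} → F) → F × F,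
      ∀ a b : Fin k → F,
        φ (fun i => b i) (∑ i, p ⟨0, by omega⟩ i * b i)
          (∑ i ∈ Finset.univ.filter
              (fun i : Fin k => ¬((r - 2) * t ≤ (i : ℕ) ∧ (i : ℕ) < (r - 1) * t)),
              p ⟨r - 1, by omega⟩ i * a i
            - ∑ i, p ⟨r - 1, by omega⟩ i * b i)
          (fun m : Fin (r - 2) =>
            ∑ i, p ⟨(m : ℕ) + 1, by have := m.isLt; omega⟩ i * b i +
              ∑ i ∈ Finset.univ.filter
                  (fun i : Fin k =>
                    (m : ℕ) * t ≤ (i : ℕ) ∧ (i : ℕ) < ((m : ℕ) + 1) * t),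
                p ⟨r - 1, by omega⟩ i * a i)
          (fun i => a i) = (a ℓ, b ℓ) := by
  refine ⟨design1RepairPhi ((r - 1) * t) (p ⟨0, by omega⟩) (p ⟨r - 1, by omega⟩)
    (fun m => p ⟨(m : ℕ) + 1, by have := m.isLt; omega⟩) ℓ, ?_⟩
  intro a b
  set p0 : Fin k → F := p ⟨0, by omega⟩ with hp0def
  set pR : Fin k → F := p ⟨r - 1, by omega⟩ with hpRdef
  unfold design1RepairPhi
  dsimp only
  have hsum : ∑ i : {i : Fin k // i ≠ ℓ}, p0 ↑i * b ↑i = (∑ i, p0 i * b i) - p0 ℓ * b ℓ :=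
    sum_subtype_ne ℓ (fun x => p0 x * b x)
  have hbl : (∑ i : Fin k, p0 i * b i - ∑ i : { i // i ≠ ℓ }, p0 ↑i * b ↑i) / p0 ℓ = b ℓ := by
    rw [hsum]
    field_simp
    ring
  rw [hbl, Prod.mk.injEq]
  refine ⟨?_, rfl⟩
  have hd : ∀ (i : Fin k), (if h : i = ℓ then b ℓ else b i) = b i := by
    intro i; split <;> simp_all
  simp only [hd, add_sub_cancel_left]
  rw [sum_groups (r - 2) (fun i => pR i * a i)]
  have hsum2 : ∑ i : {i : Fin k // (r - 1) * t ≤ (i : ℕ) ∧ i ≠ ℓ}, pR ↑i * a ↑i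
      = (∑ i ∈ Finset.univ.filter (fun i : Fin k => (r - 1) * t ≤ (i : ℕ)), pR i * a i)
        - pR ℓ * a ℓ := sum_subtype_le_ne _ _ hℓ (fun x => pR x * a x)
  rw [hsum2]
  have hsplit : ∑ i ∈ Finset.univ.filter
        (fun i : Fin k => ¬((r - 2) * t ≤ (i : ℕ) ∧ (i : ℕ) < (r - 1) * t)),
        pR i * a i
      = (∑ i ∈ Finset.univ.filter (fun i : Fin k => (i : ℕ) < (r - 2) * t), pR i * a i)
        + ∑ i ∈ Finset.univ.filter (fun i : Fin k => (r - 1) * t ≤ (i : ℕ)), pR i * a i := by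
    rw [Finset.sum_filter, Finset.sum_filter, Finset.sum_filter, ← Finset.sum_add_distrib]
    refine Finset.sum_congr rfl fun i _ => ?_
    have h2 : (r - 2) * t ≤ (r - 1) * t := Nat.mul_le_mul_right t (by omega)
    split_ifs <;> first | (exfalso; omega) | simp
  rw [hsplit]
  have hne : pR ℓ ≠ 0 := hpl
  field_simp
  ring
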